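/- Fix r ≥ 2 and k ≥ 1. Consider the random directed graph on [k]² in which, for each row and each column (i.e., each set of k points agreeing in one coordinate), one point of that line is chosen independently and uniformly at random as its winner, and there is an edge from a point to the winner of each of its two lines. The expected number of directed cycles of length 2r (alternating between horizontal and vertical steps, with r distinct x-coordinates and r distinct y-coordinates) equals (k(k-1)⋯(k-r+1))² / (r·k^(2r)), which is at most 1/r. -/

import Mathlib

open Finset

lemma card_prescribed {α β ι : Type*} [Fintype α] [Fintype β] [Fintype ι]
    (e : ι → α) (he : Function.Injective e) (c : ι → β) :
    Nat.card {f : α → β // ∀ i, f (e i) = c i} =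
      Fintype.card β ^ (Fintype.card α - Fintype.card ι) := by
  classical
  have equiv : {f : α → β // ∀ i, f (e i) = c i} ≃ ({a : α // a ∉ Set.range e} → β) := by
    refine
      { toFun := fun f a => f.1 a.1
        invFun := fun g =>
          ⟨fun a => if h : ∃ i, e i = a then c (Classical.choose h)
            else g ⟨a, by simpa [Set.mem_range] using h⟩, ?_⟩
        left_inv := ?_, right_inv := ?_ }
    · intro i
      have h : ∃ j, e j = e i := ⟨i, rfl⟩
      simp only [dif_pos h]
      have := Classical.choose_spec h
      rw [he this]
    · rintro ⟨f, hf⟩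
      ext a
      by_cases h : ∃ i, e i = a
      · simp only [dif_pos h]
        have := Classical.choose_spec h
        rw [← hf, this]
      · simp [dif_neg h]
    · intro g
      ext a
      have h : ¬ ∃ i, e i = a.1 := by
        rcases a with ⟨a, ha⟩
        simpa [Set.mem_range] using ha
      simp [dif_neg h]
  rw [Nat.card_eq_of_equiv_fin (equiv.trans (Fintype.equivFin _))]
  simp only [Fintype.card_fun]
  congr 1
  rw [Fintype.card_subtype_compl]
  congr 1
  rw [Fintype.card_eq.mpr ⟨(Equiv.ofInjective e he)⟩]

lemma card_inj (r k : ℕ) :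
    Nat.card {f : Fin r → Fin k // Function.Injective f} = k.descFactorial r := by
  classical
  rw [Nat.card_eq_fintype_card,
    Fintype.card_eq.mpr ⟨(Equiv.subtypeInjectiveEquivEmbedding (Fin r) (Fin k))⟩,
    Fintype.card_embedding_eq]
  simp

lemma cast_descFactorial (k r : ℕ) :
    ((k.descFactorial r : ℕ) : ℝ) = ∏ i ∈ Finset.range r, ((k : ℝ) - i) := by
  by_cases h : r ≤ k
  · rw [Nat.descFactorial_eq_prod_range, Nat.cast_prod]
    refine Finset.prod_congr rfl fun i hi => ?_
    rw [Finset.mem_range] at hi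
    have : i ≤ k := le_trans (Nat.le_of_lt_succ (Nat.lt_succ_of_lt hi)) h
    push_cast [Nat.cast_sub this]
    ring
  · push_neg at h
    rw [Nat.descFactorial_eq_zero_iff_lt.mpr h]
    rw [eq_comm]
    simp only [Nat.cast_zero]
    exact Finset.prod_eq_zero (Finset.mem_range.mpr h) (by simp)

lemma card_w (k r : ℕ) [NeZero r] (x y : Fin r → Fin k)
    (hx : Function.Injective x) (hy : Function.Injective y) :
    Nat.card {w : (Fin k → Fin k) × (Fin k → Fin k) //
      ∀ i : Fin r, w.1 (y i) = x (i + 1) ∧ w.2 (x (i + 1)) = y (i + 1)} =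
      k ^ (k - r) * k ^ (k - r) := by
  classical
  have hx1 : Function.Injective (fun i : Fin r => x (i + 1)) :=
    hx.comp (add_left_injective 1)
  have e1 : {w : (Fin k → Fin k) × (Fin k → Fin k) //
        ∀ i : Fin r, w.1 (y i) = x (i + 1) ∧ w.2 (x (i + 1)) = y (i + 1)} ≃
      {f : Fin k → Fin k // ∀ i : Fin r, f (y i) = x (i + 1)} ×
        {g : Fin k → Fin k // ∀ i : Fin r, g (x (i + 1)) = y (i + 1)} :=
    (Equiv.subtypeEquivRight (fun w => by
      constructor
      · intro h; exact ⟨fun i => (h i).1, fun i => (h i).2⟩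
      · intro h i; exact ⟨h.1 i, h.2 i⟩)).trans (Equiv.subtypeProdEquivProd)
  rw [Nat.card_congr e1, Nat.card_prod,
    card_prescribed y hy (fun i => x (i + 1)),
    card_prescribed (fun i : Fin r => x (i + 1)) hx1 (fun i => y (i + 1))]
  simp

lemma card_injpair (k r : ℕ) :
    Nat.card {p : (Fin r → Fin k) × (Fin r → Fin k) //
        Function.Injective p.1 ∧ Function.Injective p.2} =
      k.descFactorial r * k.descFactorial r := by
  rw [Nat.card_congr (Equiv.subtypeProdEquivProd), Nat.card_prod, card_inj]

lemma total_sum (k r : ℕ) [NeZero r] :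
    ∑ w : (Fin k → Fin k) × (Fin k → Fin k),
      Nat.card {p : (Fin r → Fin k) × (Fin r → Fin k) //
          Function.Injective p.1 ∧ Function.Injective p.2 ∧
          ∀ i : Fin r, w.1 (p.2 i) = p.1 (i + 1) ∧ w.2 (p.1 (i + 1)) = p.2 (i + 1)} =
      (k.descFactorial r * k.descFactorial r) * (k ^ (k - r) * k ^ (k - r)) := by
  classical
  have step1 :
      ∑ w : (Fin k → Fin k) × (Fin k → Fin k),
        Nat.card {p : (Fin r → Fin k) × (Fin r → Fin k) //
            Function.Injective p.1 ∧ Function.Injective p.2 ∧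
            ∀ i : Fin r, w.1 (p.2 i) = p.1 (i + 1) ∧ w.2 (p.1 (i + 1)) = p.2 (i + 1)} =
      ∑ w : (Fin k → Fin k) × (Fin k → Fin k),
        ∑ p : (Fin r → Fin k) × (Fin r → Fin k),
          if Function.Injective p.1 ∧ Function.Injective p.2 ∧
            ∀ i : Fin r, w.1 (p.2 i) = p.1 (i + 1) ∧ w.2 (p.1 (i + 1)) = p.2 (i + 1)
          then 1 else 0 := by
    refine Finset.sum_congr rfl fun w _ => ?_
    rw [Nat.card_eq_fintype_card, Fintype.card_subtype, Finset.card_filter]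
  rw [step1, Finset.sum_comm]
  have step2 : ∀ p : (Fin r → Fin k) × (Fin r → Fin k),
      (∑ w : (Fin k → Fin k) × (Fin k → Fin k),
        if Function.Injective p.1 ∧ Function.Injective p.2 ∧
            ∀ i : Fin r, w.1 (p.2 i) = p.1 (i + 1) ∧ w.2 (p.1 (i + 1)) = p.2 (i + 1)
        then 1 else 0) =
      if Function.Injective p.1 ∧ Function.Injective p.2
      then k ^ (k - r) * k ^ (k - r) else 0 := by
    intro p
    by_cases hq : Function.Injective p.1 ∧ Function.Injective p.2
    · rw [if_pos hq, ← card_w k r p.1 p.2 hq.1 hq.2,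
        Nat.card_eq_fintype_card, Fintype.card_subtype, Finset.card_filter]
      refine Finset.sum_congr rfl fun w _ => ?_
      simp [hq.1, hq.2]
    · rw [if_neg hq]
      refine Finset.sum_eq_zero fun w _ => ?_
      rw [if_neg]
      tauto
  simp_rw [step2]
  rw [Finset.sum_ite, Finset.sum_const, Finset.sum_const_zero, add_zero, smul_eq_mul]
  congr 1
  rw [← card_injpair k r, Nat.card_eq_fintype_card, Fintype.card_subtype]


/-- Random directed graph on `[k]²`: each row `y` picks a uniform winner `w.1 y`
(an `x`-coordinate) and each column `x` picks a uniform winner `w.2 x`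
(a `y`-coordinate), all `2k` choices independent and uniform; equivalently, the
sample space is all pairs `w : (Fin k → Fin k) × (Fin k → Fin k)` with the uniform
measure.  A directed cycle of length `2r` alternating horizontal/vertical steps
corresponds to a pair of injective sequences `x y : Fin r → Fin k` with
`w.1 (y i) = x (i+1)` and `w.2 (x (i+1)) = y (i+1)` for all `i` (cyclically); each
cycle is counted by exactly `r` such sequence pairs (cyclic rotations).
The expected number of cycles of length `2r` equals
`(k(k-1)⋯(k-r+1))² / (r·k^(2r))`, which is at most `1/r`. -/
theorem expected_cycles_length_2r (k r : ℕ) [NeZero r] (hk : 1 ≤ k) (hr : 2 ≤ r) :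
    (∑ w : (Fin k → Fin k) × (Fin k → Fin k),
        (Nat.card {p : (Fin r → Fin k) × (Fin r → Fin k) //
            Function.Injective p.1 ∧ Function.Injective p.2 ∧
            ∀ i : Fin r, w.1 (p.2 i) = p.1 (i + 1) ∧ w.2 (p.1 (i + 1)) = p.2 (i + 1)} : ℝ)
          / r) /
        (Nat.card ((Fin k → Fin k) × (Fin k → Fin k)) : ℝ) =
      (∏ i ∈ Finset.range r, ((k : ℝ) - i)) ^ 2 / (r * (k : ℝ) ^ (2 * r)) ∧
    (∏ i ∈ Finset.range r, ((k : ℝ) - i)) ^ 2 / (r * (k : ℝ) ^ (2 * r)) ≤ 1 / r := by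
  have hk0 : (0:ℝ) < (k:ℝ) := by exact_mod_cast hk
  have hr0 : (0:ℝ) < (r:ℝ) := by
    have := Nat.pos_of_ne_zero (NeZero.ne r); exact_mod_cast this
  have hP : ((k.descFactorial r : ℕ) : ℝ) = ∏ i ∈ Finset.range r, ((k : ℝ) - i) :=
    cast_descFactorial k r
  constructor
  · rw [← Finset.sum_div, ← Nat.cast_sum, total_sum k r]
    have hspace : (Nat.card ((Fin k → Fin k) × (Fin k → Fin k)) : ℝ) =
        (k:ℝ)^k * (k:ℝ)^k := by
      rw [Nat.card_eq_fintype_card]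
      simp
    rw [hspace]
    push_cast
    rw [hP]
    by_cases hrk : r ≤ k
    · have hpowk : (k:ℝ)^k = (k:ℝ)^r * (k:ℝ)^(k-r) := by
        rw [← pow_add]
        congr 1
        omega
      rw [hpowk]
      have h1 : ((k:ℝ)^(k-r)) ≠ 0 := by positivity
      have h2 : ((k:ℝ)^r) ≠ 0 := by positivity
      rw [two_mul, pow_add]
      field_simp
    · push_neg at hrk
      have hD : k.descFactorial r = 0 := Nat.descFactorial_eq_zero_iff_lt.mpr hrk
      have hPP : (∏ i ∈ Finset.range r, ((k : ℝ) - i)) = 0 := by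
        rw [← hP, hD]; simp
      rw [hPP]
      simp [hD]
  · have hsq : (∏ i ∈ Finset.range r, ((k : ℝ) - i)) ^ 2 ≤ (k:ℝ)^(2*r) := by
      by_cases hrk : r ≤ k
      · have hle : (∏ i ∈ Finset.range r, ((k : ℝ) - i)) ≤ (k:ℝ)^r := by
          calc ∏ i ∈ Finset.range r, ((k : ℝ) - i) ≤ ∏ i ∈ Finset.range r, (k:ℝ) := by
                refine Finset.prod_le_prod (fun i hi => ?_) (fun i hi => by
                  simp only [Finset.mem_range] at hi
                  have : (i:ℝ) ≥ 0 := by positivity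
                  linarith)
                simp only [Finset.mem_range] at hi
                have : (i:ℝ) ≤ (k:ℝ) := by exact_mod_cast le_of_lt (lt_of_lt_of_le hi hrk)
                linarith
            _ = (k:ℝ)^r := by rw [Finset.prod_const, Finset.card_range]
        have hge : (0:ℝ) ≤ ∏ i ∈ Finset.range r, ((k : ℝ) - i) := by
          refine Finset.prod_nonneg fun i hi => ?_
          simp only [Finset.mem_range] at hi
          have : (i:ℝ) ≤ (k:ℝ) := by exact_mod_cast le_of_lt (lt_of_lt_of_le hi hrk)
          linarith
        calc (∏ i ∈ Finset.range r, ((k : ℝ) - i)) ^ 2 ≤ ((k:ℝ)^r)^2 := by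
              exact pow_le_pow_left₀ hge hle 2
          _ = (k:ℝ)^(2*r) := by rw [← pow_mul]; ring_nf
      · push_neg at hrk
        have hPP : (∏ i ∈ Finset.range r, ((k : ℝ) - i)) = 0 := by
          rw [← hP, Nat.descFactorial_eq_zero_iff_lt.mpr hrk]; simp
        rw [hPP]
        simpa using (by positivity : (0:ℝ) ≤ (k:ℝ)^(2*r))
    have hpos : (0:ℝ) < (r:ℝ) * (k:ℝ)^(2*r) := by positivity
    rw [div_le_div_iff₀ hpos hr0]
    nlinarith [sq_nonneg (∏ i ∈ Finset.range r, ((k : ℝ) - i))]
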